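/- Let n ≥ 3 be an integer and let ŷ ∈ ℝⁿ satisfy ŷ(1) = 0 and ŷ(n) = 0. Suppose z̄ ∈ ℝ is such that s := ∑_{i=2}^{n−1} ŷ(i) z̄^{i−1} ≠ 0. Define c̄ := s / (∑_{i=0}^{n−1} z̄^{2i}) and ȳ ∈ ℝⁿ by ȳ(k) = c̄ z̄^{k−1} for k = 1,…,n. Then rank(H₂(ȳ)) = 1 and ‖ȳ − ŷ‖² = ‖ŷ‖² − c̄² ∑_{i=0}^{n−1} z̄^{2i} < ‖ŷ‖². -/

import Mathlib

/-- The 2-row Hankel operator `H₂ : ℝⁿ → ℝ^{2×(n-1)}` (0-based indices):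
`(H₂ y)(i,j) = y (i + j)`. -/
def hankel2 (n : ℕ) (hn : 1 < n) (y : EuclideanSpace ℝ (Fin n)) :
    Matrix (Fin 2) (Fin (n - 1)) ℝ :=
  fun i j => y ⟨i.val + j.val, by omega⟩

lemma euclid_norm_sq {n : ℕ} (x : EuclideanSpace ℝ (Fin n)) : ‖x‖ ^ 2 = ∑ i, x i ^ 2 := by
  rw [EuclideanSpace.norm_eq, Real.sq_sqrt (by positivity)]
  simp [sq_abs]

/-- let `ŷ(1) = 0` and `ŷ(n) = 0` (0-based: entries `0` and `n-1` vanish), and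
suppose `s := ∑_{i=2}^{n-1} ŷ(i) z̄^{i-1}` (0-based: `∑_{1 ≤ i ≤ n-2} ŷ(i) z̄^{i}`) is nonzero.
With `c̄ := s / ∑_{i=0}^{n-1} z̄^{2i}` and `ȳ(k) = c̄ z̄^{k-1}` (0-based: `ȳ(k) = c̄ z̄^{k}`),
one has `rank(H₂(ȳ)) = 1` and `‖ȳ − ŷ‖² = ‖ŷ‖² − c̄² ∑_{i=0}^{n-1} z̄^{2i} < ‖ŷ‖²`. -/
theorem stmt12 (n : ℕ) (hn : 3 ≤ n)
    (yhat : EuclideanSpace ℝ (Fin n))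
    (h1 : yhat ⟨0, by omega⟩ = 0) (h2 : yhat ⟨n - 1, by omega⟩ = 0)
    (zbar : ℝ) (s : ℝ)
    (hs_def : s = ∑ i : Fin n,
        if 1 ≤ (i : ℕ) ∧ (i : ℕ) ≤ n - 2 then yhat i * zbar ^ (i : ℕ) else 0)
    (hs : s ≠ 0)
    (cbar : ℝ) (hc_def : cbar = s / (∑ i ∈ Finset.range n, zbar ^ (2 * i)))
    (ybar : EuclideanSpace ℝ (Fin n))
    (hy_def : ∀ k : Fin n, ybar k = cbar * zbar ^ (k : ℕ)) :
    Matrix.rank (hankel2 n (by omega) ybar) = 1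
      ∧ ‖ybar - yhat‖ ^ 2 = ‖yhat‖ ^ 2 - cbar ^ 2 * (∑ i ∈ Finset.range n, zbar ^ (2 * i))
      ∧ ‖ybar - yhat‖ ^ 2 < ‖yhat‖ ^ 2 := by
  set Q : ℝ := ∑ i ∈ Finset.range n, zbar ^ (2 * i) with hQ
  have hQpos : 0 < Q := by
    apply Finset.sum_pos' (fun i _ => by rw [mul_comm, pow_mul]; positivity)
    exact ⟨0, Finset.mem_range.2 (by omega), by norm_num⟩
  have hcbar : cbar ≠ 0 := by
    rw [hc_def]; exact div_ne_zero hs hQpos.ne'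
  have hsQ : s = cbar * Q := by
    rw [hc_def, div_mul_cancel₀ s hQpos.ne']
  -- rank part
  have hrank : Matrix.rank (hankel2 n (by omega) ybar) = 1 := by
    have hfact : hankel2 n (by omega) ybar =
        (Matrix.of fun (i : Fin 2) (_ : Fin 1) => zbar ^ (i : ℕ)) *
          (Matrix.of fun (_ : Fin 1) (j : Fin (n - 1)) => cbar * zbar ^ (j : ℕ)) := by
      ext i j
      simp [hankel2, Matrix.mul_apply, hy_def, pow_add]
      ring
    refine le_antisymm ?_ ?_
    · rw [hfact]
      calc Matrix.rank _ ≤ Matrix.rank (Matrix.of fun (i : Fin 2) (_ : Fin 1) => zbar ^ (i : ℕ)) :=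
            Matrix.rank_mul_le_left _ _
        _ ≤ Fintype.card (Fin 1) := Matrix.rank_le_card_width _
        _ = 1 := by simp
    · rw [Nat.one_le_iff_ne_zero]
      intro h0
      have hbot : LinearMap.range (hankel2 n (by omega) ybar).mulVecLin = ⊥ :=
        Submodule.finrank_eq_zero.mp h0
      have hzero : (hankel2 n (by omega) ybar).mulVecLin = 0 :=
        LinearMap.range_eq_bot.mp hbot
      have : (hankel2 n (by omega) ybar).mulVecLin (Pi.single ⟨0, by omega⟩ 1) 0 = cbar := by
        simp [Matrix.mulVecLin_apply, Matrix.mulVec_single, hankel2, hy_def]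
      rw [hzero] at this
      simp at this
      exact hcbar this.symm
  refine ⟨hrank, ?_, ?_⟩
  · -- norm identity
    have hsum_ybar_sq : ∑ k : Fin n, (ybar k) ^ 2 = cbar ^ 2 * Q := by
      rw [hQ, Finset.mul_sum, ← Fin.sum_univ_eq_sum_range (fun i => cbar ^ 2 * zbar ^ (2 * i))]
      refine Finset.sum_congr rfl fun k _ => ?_
      rw [hy_def, mul_pow, mul_comm 2 (k : ℕ), pow_mul]
    have hcross : ∑ k : Fin n, ybar k * yhat k = cbar * s := by
      rw [hs_def, Finset.mul_sum]
      refine Finset.sum_congr rfl fun k _ => ?_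
      by_cases hk : 1 ≤ (k : ℕ) ∧ (k : ℕ) ≤ n - 2
      · rw [if_pos hk, hy_def]; ring
      · rw [if_neg hk]
        have hk0 : (k : ℕ) = 0 ∨ (k : ℕ) = n - 1 := by
          have := k.isLt; omega
        have : yhat k = 0 := by
          rcases hk0 with h | h
          · have : k = ⟨0, by omega⟩ := Fin.ext h
            rw [this]; exact h1
          · have : k = ⟨n - 1, by omega⟩ := Fin.ext h
            rw [this]; exact h2
        rw [this]; ring
    have hexp : ‖ybar - yhat‖ ^ 2 = ‖yhat‖ ^ 2 - cbar ^ 2 * Q := by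
      rw [euclid_norm_sq, euclid_norm_sq]
      have : ∀ k : Fin n, (ybar - yhat) k = ybar k - yhat k := fun k => by simp
      simp_rw [this, sub_sq]
      rw [Finset.sum_add_distrib, Finset.sum_sub_distrib, hsum_ybar_sq]
      have : ∑ k : Fin n, 2 * ybar k * yhat k = 2 * (cbar * s) := by
        rw [← hcross, Finset.mul_sum]; exact Finset.sum_congr rfl fun k _ => by ring
      rw [this, hsQ]; ring
    exact hexp
  · have hexp : ‖ybar - yhat‖ ^ 2 = ‖yhat‖ ^ 2 - cbar ^ 2 * Q := by
      rw [euclid_norm_sq, euclid_norm_sq]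
      have : ∀ k : Fin n, (ybar - yhat) k = ybar k - yhat k := fun k => by simp
      simp_rw [this, sub_sq]
      rw [Finset.sum_add_distrib, Finset.sum_sub_distrib]
      have h1' : ∑ k : Fin n, (ybar k) ^ 2 = cbar ^ 2 * Q := by
        rw [hQ, Finset.mul_sum, ← Fin.sum_univ_eq_sum_range (fun i => cbar ^ 2 * zbar ^ (2 * i))]
        refine Finset.sum_congr rfl fun k _ => ?_
        rw [hy_def, mul_pow, mul_comm 2 (k : ℕ), pow_mul]
      have h2' : ∑ k : Fin n, 2 * ybar k * yhat k = 2 * (cbar * s) := by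
        have hcross : ∑ k : Fin n, ybar k * yhat k = cbar * s := by
          rw [hs_def, Finset.mul_sum]
          refine Finset.sum_congr rfl fun k _ => ?_
          by_cases hk : 1 ≤ (k : ℕ) ∧ (k : ℕ) ≤ n - 2
          · rw [if_pos hk, hy_def]; ring
          · rw [if_neg hk]
            have hk0 : (k : ℕ) = 0 ∨ (k : ℕ) = n - 1 := by
              have := k.isLt; omega
            have : yhat k = 0 := by
              rcases hk0 with h | h
              · have : k = ⟨0, by omega⟩ := Fin.ext h
                rw [this]; exact h1
              · have : k = ⟨n - 1, by omega⟩ := Fin.ext h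
                rw [this]; exact h2
            rw [this]; ring
        rw [← hcross, Finset.mul_sum]; exact Finset.sum_congr rfl fun k _ => by ring
      rw [h1', h2', hsQ]; ring
    rw [hexp]
    have : 0 < cbar ^ 2 * Q := by positivity
    linarith
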